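/- Let A : X^n → T be a (possibly randomized) algorithm selecting a test statistic, and suppose A has β-approximate max-information at most k over all (possibly non-product) distributions on X^n, i.e. I^β_∞(A,n) ≤ k. Then γ(α) = max((α − β)/2^k, 0) is a valid p-value correction function for A: for every significance level α ∈ [0,1] and every distribution S over X^n, the probability (over X ~ S and the coins of A) that the selected statistic φ_i = A(X) satisfies both S ∈ H_0^(i) and p_i(φ_i(X)) ≤ γ(α) is at most α. -/

import Mathlib

open scoped ENNReal
open MeasureTheory

/-- The probability that a sample from the probability mass function `μ` lands in `S`. -/
noncomputable def prob {α : Type*} (μ : PMF α) (S : Set α) : ℝ :=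
  (μ.toOuterMeasure S).toReal

/-- The independent coupling of two distributions: a pair whose components are independent
with the given marginal distributions. -/
noncomputable def indepPair {α β : Type*} (p : PMF α) (q : PMF β) : PMF (α × β) :=
  p.bind fun a => q.map fun b => (a, b)

/-- `MaxInfoLe μ b k` : the `b`-approximate max-information of the joint distribution `μ`
is at most `k` (measured in bits):  for every event `O` with `Pr[(X,Z) ∈ O] > b`,
`Pr[(X,Z) ∈ O] - b ≤ 2^k · Pr[X ⊗ Z ∈ O]`. -/
def MaxInfoLe {α β : Type*} (μ : PMF (α × β)) (b k : ℝ) : Prop :=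
  ∀ O : Set (α × β), b < prob μ O →
    prob μ O - b ≤ 2 ^ k * prob (indepPair (μ.map Prod.fst) (μ.map Prod.snd)) O

/-- The `n`-fold product (i.i.d.) distribution `P^n` on datasets of size `n`. -/
noncomputable def iidPMF {X : Type*} (P : PMF X) : (n : ℕ) → PMF (Fin n → X)
  | 0 => PMF.pure (fun i => i.elim0)
  | n + 1 => P.bind fun a => (iidPMF P n).map fun x => Fin.cons a x

/-- The joint distribution of `(X, A(X))` where `X ∼ μ` and `A` is a randomized algorithm. -/
noncomputable def jointPMF {D Y : Type*} (μ : PMF D) (A : D → PMF Y) : PMF (D × Y) :=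
  μ.bind fun x => (A x).map fun y => (x, y)

lemma pmf_toOM_le_one {α : Type*} (p : PMF α) (s : Set α) : p.toOuterMeasure s ≤ 1 := by
  rw [PMF.toOuterMeasure_apply]
  calc ∑' x, s.indicator p x ≤ ∑' x, p x :=
        ENNReal.tsum_le_tsum fun x => Set.indicator_apply_le fun _ => le_rfl
    _ = 1 := p.tsum_coe

lemma pmf_toOM_ne_top {α : Type*} (p : PMF α) (s : Set α) : p.toOuterMeasure s ≠ ∞ :=
  (lt_of_le_of_lt (pmf_toOM_le_one p s) ENNReal.one_lt_top).ne

lemma jointPMF_fst {D Y : Type*} (μ : PMF D) (A : D → PMF Y) :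
    (jointPMF μ A).map Prod.fst = μ := by
  rw [jointPMF, PMF.map_bind]
  have : ∀ x, ((A x).map fun y => (x, y)).map Prod.fst = PMF.pure x := by
    intro x
    rw [PMF.map_comp]
    exact PMF.map_const (A x) x
  simp_rw [this]
  exact PMF.bind_pure μ

lemma jointPMF_toOM {D Y : Type*} (μ : PMF D) (A : D → PMF Y) (O : Set (D × Y)) :
    (jointPMF μ A).toOuterMeasure O
      = ∑' x, μ x * (A x).toOuterMeasure {y | (x, y) ∈ O} := by
  rw [jointPMF, PMF.toOuterMeasure_bind_apply]
  exact tsum_congr fun x => by rw [PMF.toOuterMeasure_map_apply]; rfl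

lemma indepPair_toOM_le {α β : Type*} (p : PMF α) (q : PMF β) (O : Set (α × β))
    (c : ℝ≥0∞) (h : ∀ t : β, p.toOuterMeasure {x | (x, t) ∈ O} ≤ c) :
    (indepPair p q).toOuterMeasure O ≤ c := by
  rw [indepPair, PMF.toOuterMeasure_bind_apply]
  have h1 : ∀ x : α, (q.map fun b => (x, b)).toOuterMeasure O
      = ∑' t, Set.indicator {t' | (x, t') ∈ O} q t := by
    intro x
    rw [PMF.toOuterMeasure_map_apply, PMF.toOuterMeasure_apply]
    rfl
  calc (∑' x, p x * (q.map fun b => (x, b)).toOuterMeasure O)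
      = ∑' x, ∑' t, p x * Set.indicator {t' | (x, t') ∈ O} q t := by
        refine tsum_congr fun x => ?_
        rw [h1, ENNReal.tsum_mul_left]
    _ = ∑' t, ∑' x, p x * Set.indicator {t' | (x, t') ∈ O} q t := ENNReal.tsum_comm
    _ = ∑' t, q t * ∑' x, Set.indicator {x' | (x', t) ∈ O} p x := by
        refine tsum_congr fun t => ?_
        rw [← ENNReal.tsum_mul_left]
        refine tsum_congr fun x => ?_
        by_cases hxt : (x, t) ∈ O <;>
          simp [Set.indicator_apply, Set.mem_setOf_eq, hxt, mul_comm]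
    _ = ∑' t, q t * p.toOuterMeasure {x | (x, t) ∈ O} := by
        refine tsum_congr fun t => congrArg _ ?_
        rw [PMF.toOuterMeasure_apply]
    _ ≤ ∑' t, q t * c := ENNReal.tsum_le_tsum fun t =>
        mul_le_mul_right (h t) _
    _ = c := by rw [ENNReal.tsum_mul_right, q.tsum_coe, one_mul]

/-- the key p-value validity lemma, with `ℝ≥0∞` threshold. -/
lemma pvalue_le {D : Type*} (S : PMF D) (f : D → ℝ) (c : ℝ≥0∞) :
    S.toOuterMeasure {x | S.toOuterMeasure {x' | f x ≤ f x'} ≤ c} ≤ c := by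
  classical
  set F : ℝ → ℝ≥0∞ := fun a => S.toOuterMeasure {x' | a ≤ f x'} with hF
  set V : Set ℝ := {a | F a ≤ c} with hV
  have hE : {x | S.toOuterMeasure {x' | f x ≤ f x'} ≤ c} = f ⁻¹' V := rfl
  rw [hE]
  by_cases hne : V.Nonempty
  · by_cases hleast : ∃ a ∈ V, ∀ a' ∈ V, a ≤ a'
    · obtain ⟨a, haV, hle⟩ := hleast
      calc S.toOuterMeasure (f ⁻¹' V)
          ≤ F a := S.toOuterMeasure.mono (fun x hx => hle _ hx)
        _ ≤ c := haV
    · have hseq : ∃ g : ℕ → ℝ, (∀ n, g n ∈ V) ∧ ∀ a ∈ V, ∃ n, g n ≤ a := by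
        by_cases hbdd : BddBelow V
        · have hsnot : sInf V ∉ V := fun hs =>
            hleast ⟨sInf V, hs, fun a' ha' => csInf_le hbdd ha'⟩
          have hch : ∀ n : ℕ, ∃ a ∈ V, a < sInf V + 1 / (n + 1) := fun n =>
            (csInf_lt_iff hbdd hne).1 (lt_add_of_pos_right _ (by positivity))
          choose g hgV hglt using hch
          refine ⟨g, hgV, fun a ha => ?_⟩
          have h1 : sInf V < a :=
            lt_of_le_of_ne (csInf_le hbdd ha) (fun h => hsnot (h ▸ ha))
          obtain ⟨n, hn⟩ := exists_nat_one_div_lt (sub_pos.2 h1)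
          exact ⟨n, by linarith [hglt n]⟩
        · have hch : ∀ n : ℕ, ∃ a ∈ V, a < -(n : ℝ) := fun n =>
            not_bddBelow_iff.1 hbdd _
          choose g hgV hglt using hch
          refine ⟨g, hgV, fun a ha => ?_⟩
          obtain ⟨n, hn⟩ := exists_nat_ge (-a)
          exact ⟨n, by linarith [hglt n]⟩
      obtain ⟨g, hgV, hcof⟩ := hseq
      have hsub : f ⁻¹' V ⊆ ⋃ n, {x | g n ≤ f x} := by
        intro x hx
        obtain ⟨n, hn⟩ := hcof _ hx
        exact Set.mem_iUnion.2 ⟨n, hn⟩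
      have hdir : Directed (· ⊆ ·) (fun n => {x : D | g n ≤ f x}) := by
        intro n m
        rcases le_total (g n) (g m) with h | h
        · exact ⟨n, subset_rfl, fun x hx => le_trans h hx⟩
        · exact ⟨m, fun x hx => le_trans h hx, subset_rfl⟩
      letI : MeasurableSpace D := ⊤
      have key : S.toOuterMeasure (⋃ n, {x | g n ≤ f x}) ≤ c := by
        rw [← S.toMeasure_apply_eq_toOuterMeasure_apply MeasurableSpace.measurableSet_top,
          Directed.measure_iUnion hdir]
        refine iSup_le fun n => ?_
        rw [S.toMeasure_apply_eq_toOuterMeasure_apply MeasurableSpace.measurableSet_top]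
        exact hgV n
      exact le_trans (S.toOuterMeasure.mono hsub) key
  · have h0 : f ⁻¹' V = ∅ := by
      rw [Set.not_nonempty_iff_eq_empty.1 hne]; simp
    simp [h0]


/-- If the selection procedure `A` has `b`-approximate max-information at most
`k` over all (possibly non-product) distributions on `X^n`, then `γ(α) = max ((α - b)/2^k) 0`
is a valid p-value correction function: for every `α ∈ [0,1]` and every distribution `S` over
`X^n`, the probability (over `X ∼ S` and the coins of `A`) that the selected statistic `φ (A X)`
has `S` in its null hypothesis and p-value at most `γ(α)` is at most `α`.  Here the p-value of
the selected test statistic `φ t` at the observed value `φ t x` is `Pr_{x' ∼ S}[φ t x' ≥ φ t x]`. -/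
theorem stmt_1 {X T : Type*} {n : ℕ} (A : (Fin n → X) → PMF T)
    (φ : T → (Fin n → X) → ℝ) (H0 : T → Set (PMF (Fin n → X))) (b k : ℝ)
    (hmi : ∀ S : PMF (Fin n → X), MaxInfoLe (jointPMF S A) b k)
    (α : ℝ) (hα0 : 0 ≤ α) (hα1 : α ≤ 1) (S : PMF (Fin n → X)) :
    prob (jointPMF S A)
      {p : (Fin n → X) × T |
        S ∈ H0 p.2 ∧
        prob S {x | φ p.2 p.1 ≤ φ p.2 x} ≤ max ((α - b) / 2 ^ k) 0} ≤ α := by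
  classical
  set γ : ℝ := max ((α - b) / 2 ^ k) 0 with hγ
  have hγ0 : 0 ≤ γ := le_max_right _ _
  set O : Set ((Fin n → X) × T) :=
    {p | S ∈ H0 p.2 ∧ prob S {x | φ p.2 p.1 ≤ φ p.2 x} ≤ γ} with hO
  have h2k : (0:ℝ) < 2 ^ k := by positivity
  by_cases hcase : (α - b) / 2 ^ k ≤ 0
  · have hγz : γ = 0 := max_eq_right hcase
    have hzero : (jointPMF S A).toOuterMeasure O = 0 := by
      rw [jointPMF_toOM]
      refine ENNReal.tsum_eq_zero.2 fun x => ?_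
      by_cases hx : S x = 0
      · rw [hx, zero_mul]
      · have hempty : {y | (x, y) ∈ O} = (∅ : Set T) := by
          ext t
          simp only [Set.mem_setOf_eq, Set.mem_empty_iff_false, iff_false, hO]
          rintro ⟨-, hp⟩
          have h1 : S.toOuterMeasure {x} ≤ S.toOuterMeasure {x' | φ t x ≤ φ t x'} :=
            S.toOuterMeasure.mono (Set.singleton_subset_iff.2 (le_refl (φ t x)))
          have h2 : (S.toOuterMeasure {x}).toReal ≤ prob S {x' | φ t x ≤ φ t x'} :=
            ENNReal.toReal_mono (pmf_toOM_ne_top _ _) h1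
          rw [PMF.toOuterMeasure_apply_singleton] at h2
          have h3 : 0 < (S x).toReal := ENNReal.toReal_pos hx (PMF.apply_ne_top S x)
          rw [hγz] at hp
          linarith
        rw [hempty]
        simp
    have : prob (jointPMF S A) O = 0 := by rw [prob, hzero, ENNReal.toReal_zero]
    linarith
  · push_neg at hcase
    have hγval : γ = (α - b) / 2 ^ k := max_eq_left hcase.le
    have hαb : b < α := by
      have := (div_pos_iff.1 hcase)
      rcases this with ⟨h1, -⟩ | ⟨-, h2⟩
      · linarith
      · linarith
    have hfst := jointPMF_fst S A
    have hind : (indepPair ((jointPMF S A).map Prod.fst)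
        ((jointPMF S A).map Prod.snd)).toOuterMeasure O ≤ ENNReal.ofReal γ := by
      rw [hfst]
      refine indepPair_toOM_le _ _ _ _ fun t => ?_
      by_cases ht : S ∈ H0 t
      · have hset : {x | (x, t) ∈ O}
            = {x | S.toOuterMeasure {x' | φ t x ≤ φ t x'} ≤ ENNReal.ofReal γ} := by
          ext x
          simp only [hO, Set.mem_setOf_eq, ht, true_and, prob]
          exact (ENNReal.le_ofReal_iff_toReal_le (pmf_toOM_ne_top _ _) hγ0).symm
        rw [hset]
        exact pvalue_le S (φ t) _
      · have hempty : {x | (x, t) ∈ O} = (∅ : Set (Fin n → X)) := by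
          ext x; simp [hO, ht]
        rw [hempty]
        simp
    have hindR : prob (indepPair ((jointPMF S A).map Prod.fst)
        ((jointPMF S A).map Prod.snd)) O ≤ γ := by
      have h := ENNReal.toReal_mono ENNReal.ofReal_ne_top hind
      rwa [ENNReal.toReal_ofReal hγ0] at h
    by_cases hb : b < prob (jointPMF S A) O
    · have hmain := hmi S O hb
      have h2 : 2 ^ k * prob (indepPair ((jointPMF S A).map Prod.fst)
          ((jointPMF S A).map Prod.snd)) O ≤ 2 ^ k * γ :=
        mul_le_mul_of_nonneg_left hindR h2k.le
      have h3 : 2 ^ k * γ = α - b := by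
        rw [hγval]; field_simp
      linarith
    · push_neg at hb
      linarith
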